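/- Let q ≥ 1 be an integer and z = 4q + 1. Let G be the group presented on z + 1 generators s, c₁, …, c_z (indices in ℤ/zℤ) with relators c_{i−q}⁻¹ · c_{i+2q}⁻¹ · s⁻¹ · c_i · c_{i+q} · s⁻¹ for each i ∈ ℤ/zℤ, together with the relator given by the ordered product over i = 1, …, z of c_i · c_{i+q} · c_{i+2q} · c_{i−q}. Then in the abelianization of G, the image of s satisfies s^{2z} = 1 and the image of the product c₁c₂⋯c_z satisfies (c₁c₂⋯c_z)⁴ = 1. -/

import Mathlib

namespace CobwebQ

/-- The generator `c i` in the free group on the generators `s, c₁, …, c_z`. -/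
def c (z : ℕ) (i : ZMod z) : FreeGroup (Option (ZMod z)) := FreeGroup.of (some i)

/-- The generator `s` in the free group on the generators `s, c₁, …, c_z`. -/
def S (z : ℕ) : FreeGroup (Option (ZMod z)) := FreeGroup.of none

/-- The relators (4.8)–(4.9) of the simplified cobweb group `Cw(2z = 8q + 2)`,
with `z = 4q + 1` and indices taken modulo `z`. -/
def rels (q z : ℕ) : Set (FreeGroup (Option (ZMod z))) :=
  {r | ∃ i : ZMod z,
      r = (c z (i - (q : ZMod z)))⁻¹ * (c z (i + 2 * (q : ZMod z)))⁻¹ * (S z)⁻¹ *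
            c z i * c z (i + (q : ZMod z)) * (S z)⁻¹} ∪
  {((List.range z).map (fun k =>
      c z ((k + 1 : ℕ) : ZMod z) * c z (((k + 1 : ℕ) : ZMod z) + (q : ZMod z)) *
      c z (((k + 1 : ℕ) : ZMod z) + 2 * (q : ZMod z)) *
      c z (((k + 1 : ℕ) : ZMod z) - (q : ZMod z)))).prod}

/-- The fundamental group of the cobweb manifold `Cw(2z = 8q + 2)`. -/
def Cw (q z : ℕ) : Type := PresentedGroup (rels q z)

instance (q z : ℕ) : Group (Cw q z) := by unfold Cw; infer_instance

/-- A list product over `List.range` is a `Finset.range` product. -/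
private theorem list_prod_range {M : Type*} [CommMonoid M] (f : ℕ → M) (n : ℕ) :
    ((List.range n).map f).prod = ∏ i ∈ Finset.range n, f i := by
  rw [← Multiset.prod_coe, ← Multiset.map_coe]; rfl

/-- Reindexing a product over `Finset.range z` by the natural cast to `ZMod z`. -/
private theorem zmod_prod_range {z : ℕ} [NeZero z] {A : Type*} [CommMonoid A]
    (F : ZMod z → A) :
    ∏ k ∈ Finset.range z, F (k : ZMod z) = ∏ i : ZMod z, F i := by
  refine Finset.prod_nbij' (fun k => (k : ZMod z)) (fun i => i.val) ?_ ?_ ?_ ?_ ?_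
  · intro a _; exact Finset.mem_univ _
  · intro i _; exact Finset.mem_range.mpr (ZMod.val_lt i)
  · intro a ha; exact ZMod.val_cast_of_lt (Finset.mem_range.mp ha)
  · intro i _; exact ZMod.natCast_rightInverse i
  · intro a _; rfl

/-- Shift-invariance of products over all of `ZMod z`. -/
private theorem zmod_prod_shift {z : ℕ} [NeZero z] {A : Type*} [CommMonoid A]
    (g : ZMod z → A) (a : ZMod z) :
    ∏ i : ZMod z, g (i + a) = ∏ i : ZMod z, g i :=
  Equiv.prod_comp (Equiv.addRight a) g

private theorem cancel6 {A : Type*} [CommGroup A] (C x : A)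
    (h : C⁻¹ * C⁻¹ * x * C * C * x = 1) : x * x = 1 := by
  have h2 : Additive.ofMul (C⁻¹ * C⁻¹ * x * C * C * x) = 0 := by rw [h]; rfl
  simp only [ofMul_mul, ofMul_inv] at h2
  have h3 : Additive.ofMul x + Additive.ofMul x =
      -Additive.ofMul C + -Additive.ofMul C + Additive.ofMul x + Additive.ofMul C +
        Additive.ofMul C + Additive.ofMul x := by abel
  rw [h2, ← ofMul_mul] at h3
  exact ofMul_eq_zero.mp h3

theorem cobweb_abelianization_orders (q : ℕ) (hq : 1 ≤ q) (z : ℕ) (hz : z = 4 * q + 1) :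
    (Abelianization.of (PresentedGroup.of (rels := rels q z) none)) ^ (2 * z) = 1 ∧
    (Abelianization.of
        (((List.range z).map (fun k =>
            PresentedGroup.of (rels := rels q z) (some ((k + 1 : ℕ) : ZMod z)))).prod)) ^ 4
      = 1 := by
  haveI : NeZero z := ⟨by omega⟩
  set A := Abelianization (PresentedGroup (rels q z)) with hA
  let f : FreeGroup (Option (ZMod z)) →* A :=
    (Abelianization.of).comp (PresentedGroup.mk (rels q z))
  have hone : ∀ r ∈ rels q z, f r = 1 := by
    intro r hr
    have h1 : PresentedGroup.mk (rels q z) r = 1 :=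
      (QuotientGroup.eq_one_iff r).mpr (Subgroup.subset_normalClosure hr)
    show Abelianization.of (PresentedGroup.mk (rels q z) r) = 1
    rw [h1, map_one]
  set C : A := ∏ i : ZMod z, f (c z i) with hC
  have hcard : (Finset.univ : Finset (ZMod z)).card = z := by
    simp [ZMod.card]
  have hshift : ∀ a : ZMod z, ∏ i : ZMod z, f (c z (i + a)) = C :=
    fun a => zmod_prod_shift (fun j => f (c z j)) a
  -- first part
  have hs : (f (S z)) ^ (2 * z) = 1 := by
    have hprod : ∏ i : ZMod z,
        ((f (c z (i - (q : ZMod z))))⁻¹ * (f (c z (i + 2 * (q : ZMod z))))⁻¹ * (f (S z))⁻¹ *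
          f (c z i) * f (c z (i + (q : ZMod z))) * (f (S z))⁻¹) = 1 := by
      apply Finset.prod_eq_one
      intro i _
      have := hone _ (Or.inl ⟨i, rfl⟩)
      simpa only [map_mul, map_inv] using this
    rw [Finset.prod_mul_distrib, Finset.prod_mul_distrib, Finset.prod_mul_distrib,
      Finset.prod_mul_distrib, Finset.prod_mul_distrib, Finset.prod_inv_distrib,
      Finset.prod_inv_distrib, Finset.prod_const, hcard] at hprod
    have e1 : ∏ i : ZMod z, f (c z (i - (q : ZMod z))) = C := by
      simpa [sub_eq_add_neg] using hshift (-(q : ZMod z))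
    have e2 : ∏ i : ZMod z, f (c z (i + 2 * (q : ZMod z))) = C := hshift _
    have e3 : ∏ i : ZMod z, f (c z (i + (q : ZMod z))) = C := hshift _
    rw [e1, e2, e3, hC] at hprod
    have h4 := cancel6 (∏ i : ZMod z, f (c z i)) ((f (S z))⁻¹ ^ z) hprod
    rw [← mul_pow, ← mul_inv_rev, inv_pow] at h4
    have h5 : (f (S z) * f (S z)) ^ z = 1 := by
      simpa using inv_injective (by simpa using h4)
    rw [pow_mul, pow_two]
    exact h5
  have hshift2 : ∀ a : ZMod z,
      ∏ k ∈ Finset.range z, f (c z (((k + 1 : ℕ) : ZMod z) + a)) = C := by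
    intro a
    have hcast : ∀ k : ℕ, (((k + 1 : ℕ) : ZMod z) + a) = ((k : ZMod z) + (1 + a)) := by
      intro k; push_cast; ring
    calc ∏ k ∈ Finset.range z, f (c z (((k + 1 : ℕ) : ZMod z) + a))
        = ∏ k ∈ Finset.range z, f (c z ((k : ZMod z) + (1 + a))) := by
          exact Finset.prod_congr rfl (fun k _ => by rw [hcast k])
      _ = ∏ i : ZMod z, f (c z (i + (1 + a))) :=
          zmod_prod_range (fun x => f (c z (x + (1 + a))))
      _ = C := hshift _
  have hshift0 : ∏ k ∈ Finset.range z, f (c z ((k + 1 : ℕ) : ZMod z)) = C := by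
    have := hshift2 0
    simpa using this
  -- second part
  have hC4 : C ^ 4 = 1 := by
    have h2 := hone _ (Or.inr rfl)
    rw [map_list_prod, List.map_map] at h2
    have h2' : ∏ k ∈ Finset.range z,
        (f (c z ((k + 1 : ℕ) : ZMod z)) * f (c z (((k + 1 : ℕ) : ZMod z) + (q : ZMod z))) *
          f (c z (((k + 1 : ℕ) : ZMod z) + 2 * (q : ZMod z))) *
          f (c z (((k + 1 : ℕ) : ZMod z) - (q : ZMod z)))) = 1 := by
      rw [← list_prod_range]
      simpa only [Function.comp_def, map_mul] using h2
    rw [Finset.prod_mul_distrib, Finset.prod_mul_distrib, Finset.prod_mul_distrib] at h2'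
    have e4 : ∏ k ∈ Finset.range z, f (c z (((k + 1 : ℕ) : ZMod z) - (q : ZMod z))) = C := by
      simpa [sub_eq_add_neg] using hshift2 (-(q : ZMod z))
    rw [hshift0, hshift2 (q : ZMod z), hshift2 (2 * (q : ZMod z)), e4] at h2'
    calc C ^ 4 = C * C * C * C := by rw [pow_succ, pow_succ, pow_succ, pow_one]
      _ = 1 := h2'
  constructor
  · exact hs
  · have hof : Abelianization.of
        (((List.range z).map (fun k =>
            PresentedGroup.of (rels := rels q z) (some ((k + 1 : ℕ) : ZMod z)))).prod)
        = C := by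
      have : ∀ k : ℕ, (PresentedGroup.of (rels := rels q z) (some ((k + 1 : ℕ) : ZMod z)))
          = PresentedGroup.mk (rels q z) (c z ((k + 1 : ℕ) : ZMod z)) := fun _ => rfl
      rw [map_list_prod, List.map_map, ← hshift0, ← list_prod_range]
      rfl
    rw [hof]
    exact hC4

end CobwebQ
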